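/- Let p(z) = a₀zⁿ + a₁z^{n−1} + ⋯ + aₙ be a real polynomial with a₀ > 0 whose roots all have negative real part (a stable polynomial). Then all coefficients aᵢ are strictly positive (Stodola's theorem). -/

import Mathlib

open Polynomial

private lemma coeff_nonneg_of_pos {f : Polynomial ℝ}
    (hf : ∀ i ≤ f.natDegree, 0 < f.coeff i) (i : ℕ) : 0 ≤ f.coeff i := by
  rcases le_or_gt i f.natDegree with h | h
  · exact (hf i h).le
  · rw [coeff_eq_zero_of_natDegree_lt h]

private lemma pos_coeff_mul {f q : Polynomial ℝ} (hf0 : f ≠ 0) (hq0 : q ≠ 0)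
    (hf : ∀ i ≤ f.natDegree, 0 < f.coeff i)
    (hq : ∀ i ≤ q.natDegree, 0 < q.coeff i) :
    ∀ i ≤ (f * q).natDegree, 0 < (f * q).coeff i := by
  intro k hk
  rw [natDegree_mul hf0 hq0] at hk
  rw [coeff_mul]
  apply Finset.sum_pos'
  · intro x _
    exact mul_nonneg (coeff_nonneg_of_pos hf _) (coeff_nonneg_of_pos hq _)
  · refine ⟨(min k f.natDegree, k - min k f.natDegree), ?_, ?_⟩
    · rw [Finset.HasAntidiagonal.mem_antidiagonal]
      omega
    · exact mul_pos (hf _ (min_le_right _ _)) (hq _ (by omega))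

private lemma stodola_aux : ∀ n (p : Polynomial ℝ), p.natDegree = n →
    0 < p.leadingCoeff →
    (∀ ρ : ℂ, (Polynomial.aeval ρ) p = 0 → ρ.re < 0) →
    ∀ i ≤ p.natDegree, 0 < p.coeff i := by
  intro n
  induction n using Nat.strong_induction_on with
  | _ n ih =>
    intro p hn hlead hstable
    have hp0 : p ≠ 0 := fun h => by simp [h, leadingCoeff_zero] at hlead
    rcases Nat.eq_zero_or_pos n with h0 | hpos
    · intro i hi
      have : i = 0 := by omega
      subst this
      have : p.coeff 0 = p.leadingCoeff := by
        rw [leadingCoeff, hn, h0]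
      rw [this]; exact hlead
    · -- p has a complex root
      have hdeg : 0 < (p.map (algebraMap ℝ ℂ)).degree := by
        rw [degree_map]
        exact natDegree_pos_iff_degree_pos.mp (by omega)
      obtain ⟨z, hz⟩ := Complex.exists_root hdeg
      have hz' : (Polynomial.aeval z) p = 0 := by
        rwa [aeval_def, ← eval_map]
      have hre : z.re < 0 := hstable z hz'
      rcases eq_or_ne z.im 0 with him | him
      · -- real root
        lift z to ℝ using him
        have hr : p.eval z = 0 := by
          have h2 := hz'
          erw [Polynomial.aeval_ofReal, RCLike.ofReal_eq_zero] at h2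
          exact h2
        obtain ⟨q, hpq⟩ := (dvd_iff_isRoot.mpr hr : (X - C z) ∣ p)
        set f : Polynomial ℝ := X - C z with hf
        have hfm : f.Monic := monic_X_sub_C z
        have hf0 : f ≠ 0 := hfm.ne_zero
        have hq0 : q ≠ 0 := fun h => hp0 (by simp [hpq, h])
        have hdf : f.natDegree = 1 := natDegree_X_sub_C z
        have hql : 0 < q.leadingCoeff := by
          have := leadingCoeff_mul f q
          rw [← hpq, hfm.leadingCoeff, one_mul] at this
          rwa [← this]
        have hqdeg : q.natDegree < n := by
          have := natDegree_mul hf0 hq0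
          rw [← hpq, hdf] at this
          omega
        have hqstable : ∀ ρ : ℂ, (Polynomial.aeval ρ) q = 0 → ρ.re < 0 := by
          intro ρ hρ
          exact hstable ρ (by rw [hpq, map_mul, hρ, mul_zero])
        have hqpos := ih q.natDegree hqdeg q rfl hql hqstable
        have hfpos : ∀ i ≤ f.natDegree, 0 < f.coeff i := by
          intro i hi
          rw [hdf] at hi
          have hzneg : z < 0 := by simpa using hre
          interval_cases i <;>
            simp only [hf, coeff_sub, coeff_X, coeff_C] <;> norm_num
          linarith
        rw [hpq]
        exact pos_coeff_mul hf0 hq0 hfpos hqpos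
      · -- complex root with nonzero imaginary part
        obtain ⟨q, hpq⟩ := p.quadratic_dvd_of_aeval_eq_zero_im_ne_zero hz' him
        set f : Polynomial ℝ := X ^ 2 - C (2 * z.re) * X + C (‖z‖ ^ 2) with hf
        have hfm : f.Monic := by
          unfold f
          monicity!
        have hf0 : f ≠ 0 := hfm.ne_zero
        have hdf : f.natDegree = 2 := by
          have : f.degree = 2 := by unfold f; compute_degree!
          exact natDegree_eq_of_degree_eq_some this
        have hq0 : q ≠ 0 := fun h => hp0 (by simp [hpq, h])
        have hql : 0 < q.leadingCoeff := by
          have := leadingCoeff_mul f q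
          rw [← hpq, hfm.leadingCoeff, one_mul] at this
          rwa [← this]
        have hqdeg : q.natDegree < n := by
          have := natDegree_mul hf0 hq0
          rw [← hpq, hdf] at this
          omega
        have hqstable : ∀ ρ : ℂ, (Polynomial.aeval ρ) q = 0 → ρ.re < 0 := by
          intro ρ hρ
          exact hstable ρ (by rw [hpq, map_mul, hρ, mul_zero])
        have hqpos := ih q.natDegree hqdeg q rfl hql hqstable
        have hz0 : z ≠ 0 := fun h => him (by simp [h])
        have hfpos : ∀ i ≤ f.natDegree, 0 < f.coeff i := by
          intro i hi
          rw [hdf] at hi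
          interval_cases i <;>
            simp only [hf, coeff_add, coeff_sub, coeff_X_pow, coeff_C_mul,
              coeff_X, coeff_C] <;> norm_num
          · exact pow_pos (norm_pos_iff.mpr hz0) 2
          · linarith
        rw [hpq]
        exact pos_coeff_mul hf0 hq0 hfpos hqpos

theorem stmt_7 (p : Polynomial ℝ) (hdeg : 1 ≤ p.natDegree)
    (hlead : 0 < p.leadingCoeff)
    (hstable : ∀ ρ : ℂ, (Polynomial.aeval ρ) p = 0 → ρ.re < 0) :
    ∀ i ≤ p.natDegree, 0 < p.coeff i :=
  stodola_aux p.natDegree p rfl hlead hstable
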